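/- Let Γ be a connected k-regular graph on v vertices that has an eigenvalue λ with multiplicity m and corresponding spectral idempotent E_λ, and let ℰ = ⟨J, E_λ⟩∘. If dim ℰ = 2, then Γ has a full indubitable partition corresponding to λ (namely an indubitable partition with m+1 cells and parameters (a,b) with a − b = λ, i.e., a = λ + (k−λ)/(m+1) and b = (k−λ)/(m+1)). -/

import Mathlib

open Matrix Finset Kronecker SimpleGraph

/-- The all-ones matrix `J`. -/
def matJ (α β : Type*) : Matrix α β ℝ := Matrix.of fun _ _ => 1

/-- Hadamard (entrywise) powers of a matrix; the 0-th power is the all-ones matrix `J`. -/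
def hadPow {V : Type*} (E : Matrix V V ℝ) : ℕ → Matrix V V ℝ
  | 0 => matJ V V
  | n + 1 => Matrix.hadamard E (hadPow E n)

/-- The idempotent `∘`-algebra `⟨J, E⟩∘`: the linear span over `ℝ` of `J` together with all
Hadamard powers `E, E∘E, E∘E∘E, …` of `E`. -/
noncomputable def hadSpan {V : Type*} (E : Matrix V V ℝ) : Submodule ℝ (Matrix V V ℝ) :=
  Submodule.span ℝ (Set.range (hadPow E))

/-- The adjacency algebra of a graph with adjacency matrix `A`:
the linear span over `ℝ` of the powers `I, A, A², …` of `A`. -/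
noncomputable def adjAlg {V : Type*} [Fintype V] [DecidableEq V] (A : Matrix V V ℝ) :
    Submodule ℝ (Matrix V V ℝ) :=
  Submodule.span ℝ (Set.range fun n : ℕ => A ^ n)

/-- `A` and `B` are permutation-similar: `B = PᵀAP` for a permutation matrix `P`,
i.e. `A` can be obtained from `B` by simultaneous re-indexing of rows and columns
along a bijection of the index types. -/
def PermSimilar {α β : Type*} (A : Matrix α α ℝ) (B : Matrix β β ℝ) : Prop :=
  ∃ e : α ≃ β, ∀ i j, A i j = B (e i) (e j)

/-- The multiplicity of `μ` as an eigenvalue of the square matrix `A`, i.e. the dimension of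
the eigenspace `ker (μ•I − A)`. -/
noncomputable def eigMult {V : Type*} [Fintype V] [DecidableEq V]
    (A : Matrix V V ℝ) (μ : ℝ) : ℕ :=
  Module.finrank ℝ (LinearMap.ker (Matrix.toLin' (μ • (1 : Matrix V V ℝ) - A)))

/-- `E` is the spectral idempotent of `A` for the eigenvalue `μ`: the real symmetric matrix
with `E² = E`, `A·E = μ·E`, and `rank E = dim ker (μI − A)`; equivalently, the matrix of the
orthogonal projection onto the eigenspace `ker (μI − A)`. -/
def IsSpectralIdempotent {V : Type*} [Fintype V] [DecidableEq V]
    (A E : Matrix V V ℝ) (μ : ℝ) : Prop :=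
  E.IsSymm ∧ E * E = E ∧ A * E = μ • E ∧ E.rank = eigMult A μ

open Classical in
/-- The map `c` describes an indubitable partition of `G` with parameters `(a, b)`:
the cells of the partition are the fibers of `c`, and for each cell `P` and each vertex `x`
the number of neighbors of `x` in `P` equals `a` if `x ∈ P` and `b` otherwise. -/
def IsIndubitable {V ι : Type*} (G : SimpleGraph V) (c : V → ι) (a b : ℕ) : Prop :=
  Function.Surjective c ∧
    ∀ (i : ι) (x : V), {y : V | G.Adj x y ∧ c y = i}.ncard = if c x = i then a else b

/-- `G` has a full indubitable partition corresponding to the eigenvalue `μ` of multiplicity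
`m`: an indubitable partition with `m + 1` cells and parameters `(a, b)` with `a − b = μ`. -/
def HasFullIndubitable {V : Type*} (G : SimpleGraph V) (μ : ℝ) (m : ℕ) : Prop :=
  ∃ (c : V → Fin (m + 1)) (a b : ℕ), IsIndubitable G c a b ∧ (a : ℝ) - (b : ℝ) = μ

instance {α β : Type*} [DecidableEq α] [DecidableEq β] (G : SimpleGraph α) (H : SimpleGraph β)
    [DecidableRel G.Adj] [DecidableRel H.Adj] : DecidableRel (G □ H).Adj := fun x y =>
  inferInstanceAs (Decidable ((G.Adj x.1 y.1 ∧ x.2 = y.2) ∨ (H.Adj x.2 y.2 ∧ x.1 = y.1)))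

section helpersXYZ
variable {v k m : ℕ} {G : SimpleGraph (Fin v)} [DecidableRel G.Adj]



lemma constant_of_eigen (hconn : G.Connected) (hreg : G.IsRegularOfDegree k) (f : Fin v → ℝ)
    (hf : G.adjMatrix ℝ *ᵥ f = (k : ℝ) • f) : ∀ x y, f x = f y := by
  classical
  have hne : Nonempty (Fin v) := hconn.nonempty
  obtain ⟨x₀, hx₀⟩ := Finite.exists_max f
  have step : ∀ x, f x = f x₀ → ∀ y, G.Adj x y → f y = f x₀ := by
    intro x hx y hxy
    by_contra hne'
    have hylt : f y < f x₀ := lt_of_le_of_ne (hx₀ y) hne'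
    have hsum : ∑ u ∈ G.neighborFinset x, f u = (k : ℝ) * f x := by
      have := congrFun hf x
      simpa [adjMatrix_mulVec_apply] using this
    have hlt : ∑ u ∈ G.neighborFinset x, f u < ∑ u ∈ G.neighborFinset x, f x₀ := by
      apply Finset.sum_lt_sum (fun i _ => hx₀ i)
      exact ⟨y, by simpa using hxy, hylt⟩
    rw [Finset.sum_const, G.card_neighborFinset_eq_degree, hreg x, hsum, hx, nsmul_eq_mul] at hlt
    exact lt_irrefl _ hlt
  have hall : ∀ (x y : Fin v) (w : G.Walk x y), f x = f x₀ → f y = f x₀ := by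
    intro x y w
    induction w with
    | nil => exact id
    | cons hab p ih => exact fun ha => ih (step _ ha _ hab)
  intro x y
  have hx := (hconn.preconnected x₀ x).elim fun w => hall _ _ w rfl
  have hy := (hconn.preconnected x₀ y).elim fun w => hall _ _ w rfl
  rw [hx, hy]

lemma trace_eq_rank_of_idem {n : Type*} [Fintype n] [DecidableEq n]
    {E : Matrix n n ℝ} (hsymm : E.IsSymm) (hidem : E * E = E) :
    E.trace = (E.rank : ℝ) := by
  classical
  have hH : E.IsHermitian := by
    rw [Matrix.IsHermitian]
    ext i j
    simp [Matrix.conjTranspose_apply, hsymm.apply]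
  have hev : ∀ i, hH.eigenvalues i = 0 ∨ hH.eigenvalues i = 1 := by
    intro i
    have hb := hH.mulVec_eigenvectorBasis i
    have h2 : E *ᵥ (E *ᵥ ⇑(hH.eigenvectorBasis i)) =
        (hH.eigenvalues i * hH.eigenvalues i) • ⇑(hH.eigenvectorBasis i) := by
      rw [hb, Matrix.mulVec_smul, hb, smul_smul]
    rw [Matrix.mulVec_mulVec, hidem, hb] at h2
    have hnz : ⇑(hH.eigenvectorBasis i) ≠ 0 := by
      have := hH.eigenvectorBasis.orthonormal.ne_zero i
      intro hc
      apply this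
      ext j
      exact congrFun hc j
    have h0 : (hH.eigenvalues i - hH.eigenvalues i * hH.eigenvalues i) •
        ⇑(hH.eigenvectorBasis i) = 0 := by
      rw [sub_smul, h2, sub_self]
    rcases smul_eq_zero.mp h0 with h | h
    · have : hH.eigenvalues i * (1 - hH.eigenvalues i) = 0 := by ring_nf; linarith [h]
      rcases mul_eq_zero.mp this with h' | h'
      · exact Or.inl h'
      · exact Or.inr (by linarith)
    · exact absurd h hnz
  have htr : E.trace = ∑ i, hH.eigenvalues i := by
    conv_lhs => rw [hH.spectral_theorem]
    rw [Unitary.conjStarAlgAut_apply, Matrix.trace_mul_cycle]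
    have hu : (star (hH.eigenvectorUnitary : Matrix n n ℝ)) *
        (hH.eigenvectorUnitary : Matrix n n ℝ) = 1 := hH.eigenvectorUnitary.prop.1
    rw [hu, Matrix.one_mul, Matrix.trace_diagonal]
    simp
  rw [htr, hH.rank_eq_card_non_zero_eigs, Fintype.card_subtype, Finset.card_filter]
  push_cast
  apply Finset.sum_congr rfl
  intro i _
  rcases hev i with h | h <;> simp [h]


end helpersXYZ

set_option maxHeartbeats 2000000 in
/-- Proposition gDD. Let `Γ` be a connected `k`-regular graph on `v` vertices
with an eigenvalue `λ` of multiplicity `m`, spectral idempotent `E_λ` and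
`ℰ = ⟨J, E_λ⟩∘`. If `dim ℰ = 2`, then `Γ` has a full indubitable partition corresponding to
`λ`: an indubitable partition with `m+1` cells and parameters `(a,b)` with
`a = λ + (k−λ)/(m+1)` and `b = (k−λ)/(m+1)`. -/
theorem statement4 (v k m : ℕ) (G : SimpleGraph (Fin v)) [DecidableRel G.Adj]
    (hconn : G.Connected) (hreg : G.IsRegularOfDegree k)
    (lam : ℝ) (hm : eigMult (G.adjMatrix ℝ) lam = m) (hm0 : 0 < m)
    (E : Matrix (Fin v) (Fin v) ℝ) (hE : IsSpectralIdempotent (G.adjMatrix ℝ) E lam)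
    (hdim : Module.finrank ℝ (hadSpan E) = 2) :
    ∃ (c : Fin v → Fin (m + 1)) (a b : ℕ), IsIndubitable G c a b ∧
      (a : ℝ) = lam + ((k : ℝ) - lam) / ((m : ℝ) + 1) ∧
      (b : ℝ) = ((k : ℝ) - lam) / ((m : ℝ) + 1) := by
  classical
  obtain ⟨hsymm, hidem, hAE, hrankE⟩ := hE
  have hne : Nonempty (Fin v) := hconn.nonempty
  have hv0 : 0 < v := Fin.pos_iff_nonempty.mpr hne
  have hrm : E.rank = m := hrankE.trans hm
  have hEne : E ≠ 0 := by
    intro h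
    rw [h, Matrix.rank_zero] at hrm
    omega
  -- E is not constant
  have hnc : ¬ (∀ x y x' y', E x y = E x' y') := by
    intro hc
    obtain ⟨x₀⟩ := hne
    have hconstJ : ∀ n : ℕ, ∃ d : ℝ, hadPow E n = d • matJ (Fin v) (Fin v) := by
      intro n
      induction n with
      | zero => exact ⟨1, (one_smul _ _).symm⟩
      | succ n ih =>
        obtain ⟨d, hd⟩ := ih
        refine ⟨E x₀ x₀ * d, ?_⟩
        ext x y
        simp [hadPow, hd, Matrix.hadamard_apply, matJ, hc x y x₀ x₀]
    have hle : hadSpan E ≤ Submodule.span ℝ {matJ (Fin v) (Fin v)} := by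
      rw [hadSpan, Submodule.span_le]
      rintro _ ⟨n, rfl⟩
      obtain ⟨d, hd⟩ := hconstJ n
      rw [hd]
      exact Submodule.smul_mem _ _ (Submodule.mem_span_singleton_self _)
    have hJne : matJ (Fin v) (Fin v) ≠ 0 := by
      intro h
      have := congrFun (congrFun h x₀) x₀
      simp [matJ] at this
    have h1 := Submodule.finrank_mono hle
    rw [hdim, finrank_span_singleton hJne] at h1
    omega
  -- lam ≠ k
  have hdeg : ∀ x : Fin v, ∑ y, G.adjMatrix ℝ x y = (k : ℝ) := by
    intro x
    have : (G.adjMatrix ℝ *ᵥ fun _ => (1:ℝ)) x = ∑ u ∈ G.neighborFinset x, 1 :=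
      adjMatrix_mulVec_apply _ _ _
    simpa [Matrix.mulVec, dotProduct, hreg x] using this
  have hlamk : lam ≠ (k : ℝ) := by
    intro heq
    apply hnc
    have hcol : ∀ j x y, E x j = E y j := by
      intro j
      apply constant_of_eigen hconn hreg
      ext x
      have : (G.adjMatrix ℝ * E) x j = lam * E x j := by rw [hAE]; simp
      rw [Matrix.mul_apply] at this
      simpa [Matrix.mulVec, dotProduct, heq] using this
    intro x y x' y'
    calc E x y = E x' y := hcol y x x'
    _ = E y x' := (hsymm.apply x' y).symm
    _ = E y' x' := hcol x' y y'
    _ = E x' y' := hsymm.apply x' y'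
  -- row sums are zero
  have hswap : ∀ (M : Matrix (Fin v) (Fin v) ℝ), Mᵀ = M → ∀ f g : Fin v → ℝ,
      (M *ᵥ f) ⬝ᵥ g = f ⬝ᵥ (M *ᵥ g) := by
    intro M hM f g
    rw [Matrix.dotProduct_mulVec, ← hM, Matrix.vecMul_transpose, hM]
  have hA1 : G.adjMatrix ℝ *ᵥ (fun _ => (1:ℝ)) = (k : ℝ) • (fun _ => (1:ℝ)) := by
    ext x
    simpa [Matrix.mulVec, dotProduct] using hdeg x
  set u : Fin v → ℝ := E *ᵥ (fun _ => (1:ℝ)) with hu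
  have hAu : G.adjMatrix ℝ *ᵥ u = lam • u := by
    rw [hu, Matrix.mulVec_mulVec, hAE, Matrix.smul_mulVec]
  have horth : u ⬝ᵥ (fun _ => (1:ℝ)) = 0 := by
    have h1 : (G.adjMatrix ℝ *ᵥ u) ⬝ᵥ (fun _ => (1:ℝ)) = u ⬝ᵥ (G.adjMatrix ℝ *ᵥ (fun _ => (1:ℝ))) :=
      hswap _ (transpose_adjMatrix G) _ _
    rw [hAu, hA1, smul_dotProduct, dotProduct_smul] at h1
    have : (lam - k) * (u ⬝ᵥ fun _ => (1:ℝ)) = 0 := by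
      rw [sub_mul]
      simpa [smul_eq_mul] using sub_eq_zero.mpr h1
    exact (mul_eq_zero.mp this).resolve_left (sub_ne_zero.mpr hlamk)
  have hEu : E *ᵥ u = u := by rw [hu, Matrix.mulVec_mulVec, hidem]
  have huu : u ⬝ᵥ u = 0 := by
    have h1 : u ⬝ᵥ u = (fun _ => (1:ℝ)) ⬝ᵥ (E *ᵥ u) := by
      conv_lhs => rw [hu]
      exact hswap _ hsymm.eq _ _
    rw [hEu] at h1
    rw [h1, dotProduct_comm]
    exact horth
  have hu0 : u = 0 := dotProduct_self_eq_zero.mp huu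
  have hrow0 : ∀ x, ∑ y, E x y = 0 := by
    intro x
    have := congrFun hu0 x
    simpa [hu, Matrix.mulVec, dotProduct] using this
  -- J ≠ 0
  have hJne : matJ (Fin v) (Fin v) ≠ 0 := by
    intro h
    obtain ⟨x₀⟩ := hne
    have := congrFun (congrFun h x₀) x₀
    simp [matJ] at this
  -- hadPow 1 = E
  have hPow1 : hadPow E 1 = E := by
    ext x y
    simp [hadPow, Matrix.hadamard_apply, matJ]
  -- E ∘ E ∈ span {E, J}
  have hEJindep : LinearIndependent ℝ ![E, matJ (Fin v) (Fin v)] := by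
    rw [LinearIndependent.pair_iff]
    intro s t hst
    obtain ⟨x₀⟩ := hne
    have hent : ∀ x y, s * E x y + t = 0 := by
      intro x y
      have := congrFun (congrFun hst x) y
      simpa [Matrix.smul_apply, matJ, smul_eq_mul] using this
    have hs : s = 0 := by
      by_contra hs
      apply hnc
      intro x y x' y'
      have h1 := hent x y
      have h2 := hent x' y'
      have : s * E x y = s * E x' y' := by linarith
      exact mul_left_cancel₀ hs this
    refine ⟨hs, ?_⟩
    have := hent x₀ x₀
    rw [hs] at this
    linarith
  have hle2 : Submodule.span ℝ (Set.range ![E, matJ (Fin v) (Fin v)]) ≤ hadSpan E := by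
    rw [Submodule.span_le]
    rintro _ ⟨i, rfl⟩
    fin_cases i
    · exact Submodule.subset_span ⟨1, hPow1⟩
    · exact Submodule.subset_span ⟨0, rfl⟩
  have hspan2 : Module.finrank ℝ (Submodule.span ℝ (Set.range ![E, matJ (Fin v) (Fin v)])) = 2 := by
    rw [finrank_span_eq_card hEJindep]
    simp
  have heqspan : Submodule.span ℝ (Set.range ![E, matJ (Fin v) (Fin v)]) = hadSpan E :=
    Submodule.eq_of_le_of_finrank_le hle2 (by rw [hdim, hspan2])
  have hmemEE : Matrix.hadamard E E ∈ Submodule.span ℝ ({E, matJ (Fin v) (Fin v)} : Set _) := by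
    have h2 : hadPow E 2 = Matrix.hadamard E E := by
      show Matrix.hadamard E (hadPow E 1) = _
      rw [hPow1]
    have : Matrix.hadamard E E ∈ hadSpan E := h2 ▸ Submodule.subset_span ⟨2, rfl⟩
    rw [← heqspan] at this
    convert this using 2
    ext z
    simp [Fin.exists_fin_two, eq_comm]
    tauto
  obtain ⟨be, al, hbeal⟩ := Submodule.mem_span_pair.mp hmemEE
  have hquad : ∀ x y, E x y * E x y = be * E x y + al := by
    intro x y
    have := congrFun (congrFun hbeal x) y
    simpa [Matrix.hadamard_apply, matJ, Matrix.smul_apply, smul_eq_mul] using this.symm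
  -- two distinct entry values
  push_neg at hnc
  obtain ⟨x1, y1, x2, y2, hne12⟩ := hnc
  have hval : ∀ x y, E x y = E x1 y1 ∨ E x y = E x2 y2 := by
    intro x y
    have h1 := hquad x1 y1
    have h2 := hquad x2 y2
    have h3 := hquad x y
    have hbe' : be = E x1 y1 + E x2 y2 := by
      have hfac : (E x1 y1 - E x2 y2) * ((E x1 y1 + E x2 y2) - be) = 0 := by
        linear_combination h1 - h2
      rcases mul_eq_zero.mp hfac with h | h
      · exact absurd (sub_eq_zero.mp h) hne12
      · linarith [sub_eq_zero.mp h]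
    have hal' : al = -(E x1 y1 * E x2 y2) := by
      rw [hbe'] at h1
      linarith [h1]
    rw [hbe', hal'] at h3
    have : (E x y - E x1 y1) * (E x y - E x2 y2) = 0 := by linear_combination h3
    rcases mul_eq_zero.mp this with h | h
    · exact Or.inl (sub_eq_zero.mp h)
    · exact Or.inr (sub_eq_zero.mp h)
  -- p = larger value, q = smaller value
  obtain ⟨p, q, hqp, hvalpq, hpatt, hqatt⟩ :
      ∃ p q : ℝ, q < p ∧ (∀ x y, E x y = p ∨ E x y = q) ∧
        (∃ x y, E x y = p) ∧ (∃ x y, E x y = q) := by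
    rcases lt_or_gt_of_ne hne12 with h | h
    · exact ⟨E x2 y2, E x1 y1, h, fun x y => (hval x y).symm,
        ⟨x2, y2, rfl⟩, ⟨x1, y1, rfl⟩⟩
    · exact ⟨E x1 y1, E x2 y2, h, hval, ⟨x1, y1, rfl⟩, ⟨x2, y2, rfl⟩⟩
  -- sum of squares along a row
  have hsq : ∀ x, ∑ y, E x y * E x y = E x x := by
    intro x
    have h := congrFun (congrFun hidem x) x
    rw [Matrix.mul_apply] at h
    rw [← h]
    exact Finset.sum_congr rfl fun y _ => by rw [hsymm.apply]
  -- q < 0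
  have hq0 : q < 0 := by
    by_contra hq
    push_neg at hq
    obtain ⟨xn, yn, hn⟩ : ∃ x y, E x y ≠ 0 := by
      by_contra h
      push_neg at h
      exact hEne (by ext x y; exact h x y)
    have hnn : ∀ y, 0 ≤ E xn y := by
      intro y
      rcases hvalpq xn y with h | h <;> rw [h] <;> linarith
    have := (Finset.sum_eq_zero_iff_of_nonneg (fun y _ => hnn y)).mp (hrow0 xn) yn (mem_univ _)
    exact hn this
  -- diagonal entries equal p
  have hdiagp : ∀ x, E x x = p := by
    intro x
    have h1 : 0 ≤ E x x := by
      rw [← hsq x]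
      exact Finset.sum_nonneg fun y _ => mul_self_nonneg _
    rcases hvalpq x x with h | h
    · exact h
    · rw [h] at h1; linarith
  -- equal rows characterisation
  have hcross : ∀ x y, ∑ w, E x w * E y w = E x y := by
    intro x y
    have h := congrFun (congrFun hidem x) y
    rw [Matrix.mul_apply] at h
    rw [← h]
    exact Finset.sum_congr rfl fun w _ => by rw [hsymm.apply w y]
  have hrows : ∀ x y, E x y = p → ∀ z, E x z = E y z := by
    intro x y hxy z
    have hsum0 : ∑ w, (E x w - E y w) * (E x w - E y w) = 0 := by
      have hexp : ∑ w, (E x w - E y w) * (E x w - E y w) =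
          (∑ w, E x w * E x w) - 2 * (∑ w, E x w * E y w) + ∑ w, E y w * E y w := by
        rw [Finset.mul_sum, ← Finset.sum_sub_distrib, ← Finset.sum_add_distrib]
        exact Finset.sum_congr rfl fun w _ => by ring
      rw [hexp, hsq x, hsq y, hcross x y, hxy, hdiagp x, hdiagp y]
      ring
    have h0 := (Finset.sum_eq_zero_iff_of_nonneg
      (fun w _ => mul_self_nonneg _)).mp hsum0 z (mem_univ _)
    have := mul_self_eq_zero.mp h0
    linarith
  -- generic row splitting
  have hsplit : ∀ (f : Fin v → ℝ) (g : ℝ → ℝ), (∀ y, f y = p ∨ f y = q) →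
      ∑ y, g (f y) = ((univ.filter fun y => f y = p).card : ℝ) * g p +
        ((v : ℝ) - ((univ.filter fun y => f y = p).card : ℝ)) * g q := by
    intro f g hf
    rw [← Finset.sum_filter_add_sum_filter_not univ (fun y => f y = p)]
    have h1 : ∑ y ∈ univ.filter (fun y => f y = p), g (f y) =
        ((univ.filter fun y => f y = p).card : ℝ) * g p := by
      rw [Finset.sum_congr rfl (fun y hy => by rw [(Finset.mem_filter.mp hy).2]),
        Finset.sum_const, nsmul_eq_mul]
    have h2 : ∑ y ∈ univ.filter (fun y => ¬ f y = p), g (f y) =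
        ((univ.filter fun y => ¬ f y = p).card : ℝ) * g q := by
      rw [Finset.sum_congr rfl
        (fun y hy => by rw [(hf y).resolve_left (Finset.mem_filter.mp hy).2]),
        Finset.sum_const, nsmul_eq_mul]
    rw [h1, h2]
    have h3 : (univ.filter fun y => ¬ f y = p).card = v - (univ.filter fun y => f y = p).card := by
      have h4 := Finset.card_filter_add_card_filter_not
        (s := (univ : Finset (Fin v))) (p := fun y => f y = p)
      rw [Finset.card_univ, Fintype.card_fin] at h4
      omega
    have h5 : (univ.filter fun y => f y = p).card ≤ v := by
      calc (univ.filter fun y => f y = p).card ≤ (univ : Finset (Fin v)).card :=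
        Finset.card_filter_le _ _
      _ = v := by rw [Finset.card_univ, Fintype.card_fin]
    rw [h3, Nat.cast_sub h5]
  have hrowEq : ∀ x, ((univ.filter fun y => E x y = p).card : ℝ) * p +
      ((v : ℝ) - ((univ.filter fun y => E x y = p).card : ℝ)) * q = 0 := by
    intro x
    have h := hsplit (E x) (fun t => t) (hvalpq x)
    rw [hrow0 x] at h
    linarith [h]
  have hcards : ∀ x y, (univ.filter fun w => E x w = p).card =
      (univ.filter fun w => E y w = p).card := by
    intro x y
    have h1 := hrowEq x
    have h2 := hrowEq y
    have h3 : ((univ.filter fun w => E x w = p).card : ℝ) * (p - q) =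
        ((univ.filter fun w => E y w = p).card : ℝ) * (p - q) := by
      linear_combination h1 - h2
    exact_mod_cast mul_right_cancel₀ (sub_ne_zero.mpr (ne_of_gt hqp)) h3
  obtain ⟨x₀⟩ := hne
  set s : ℕ := (univ.filter fun y => E x₀ y = p).card with hs_def
  have hs1 : 0 < s := Finset.card_pos.mpr ⟨x₀, Finset.mem_filter.mpr ⟨mem_univ _, hdiagp x₀⟩⟩
  have hsv : s < v := by
    obtain ⟨xq, yq, hqq⟩ := hqatt
    have hns : yq ∉ (univ.filter fun y => E xq y = p) := by
      intro hmem
      rw [(Finset.mem_filter.mp hmem).2] at hqq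
      exact absurd hqq (ne_of_gt hqp)
    have hne' : (univ.filter fun y => E xq y = p) ≠ univ := by
      intro h
      rw [h] at hns
      exact hns (mem_univ yq)
    have hlt : (univ.filter fun y => E xq y = p).card < v := by
      have hle : (univ.filter fun y => E xq y = p).card ≤ v := by
        calc _ ≤ (univ : Finset (Fin v)).card := Finset.card_filter_le _ _
        _ = v := by rw [Finset.card_univ, Fintype.card_fin]
      rcases lt_or_eq_of_le hle with h | h
      · exact h
      · exact absurd (Finset.eq_univ_of_card _ (h.trans (Fintype.card_fin v).symm)) hne'
    rw [hs_def, hcards x₀ xq]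
    exact hlt
  have hrowEq0 : (s : ℝ) * p + ((v : ℝ) - (s : ℝ)) * q = 0 := hrowEq x₀
  have hsqEq : (s : ℝ) * (p * p) + ((v : ℝ) - (s : ℝ)) * (q * q) = p := by
    have := hsplit (E x₀) (fun t => t * t) (hvalpq x₀)
    rw [hsq x₀, hdiagp x₀] at this
    rw [← hs_def] at this
    exact this.symm
  have hsR : (1 : ℝ) ≤ (s : ℝ) := by exact_mod_cast hs1
  have hsvR : (s : ℝ) + 1 ≤ (v : ℝ) := by exact_mod_cast hsv
  have hppos : 0 < p := by
    have h2 : 0 < ((v : ℝ) - s) * (-q) := mul_pos (by linarith) (by linarith)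
    by_contra hp
    push_neg at hp
    have h3 : (s : ℝ) * p ≤ 0 := mul_nonpos_of_nonneg_of_nonpos (by linarith) hp
    nlinarith
  have hspq : (s : ℝ) * (p - q) = 1 := by
    have hfac : p * ((s : ℝ) * (p - q) - 1) = 0 := by
      linear_combination hsqEq - q * hrowEq0
    rcases mul_eq_zero.mp hfac with h | h
    · exact absurd h (ne_of_gt hppos)
    · linarith
  have hvq : (v : ℝ) * q = -1 := by linear_combination hrowEq0 - hspq
  have htrE : E.trace = (v : ℝ) * p := by
    have hd : ∀ i : Fin v, E.diag i = p := fun i => hdiagp i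
    unfold Matrix.trace
    rw [Finset.sum_congr rfl fun i _ => hd i, Finset.sum_const, nsmul_eq_mul,
      Finset.card_univ, Fintype.card_fin]
  have hvp : (v : ℝ) * p = (m : ℝ) := by
    rw [← htrE, trace_eq_rank_of_idem hsymm hidem, hrm]
  have hv_eq : (v : ℝ) = (s : ℝ) * ((m : ℝ) + 1) := by
    linear_combination (-(v : ℝ)) * hspq + (s : ℝ) * hvp - (s : ℝ) * hvq
  -- the partition setoid
  let st : Setoid (Fin v) := ⟨fun x y => E x y = p,
    ⟨fun x => hdiagp x,
     fun {x y} h => by rw [hsymm.apply x y]; exact h,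
     fun {x y z} h1 h2 => by rw [hrows x y h1 z]; exact h2⟩⟩
  letI : DecidableRel st.r := fun a b => Classical.propDecidable _
  letI instQ : Fintype (Quotient st) := Quotient.fintype st
  have hfibcard : ∀ i : Quotient st,
      (univ.filter fun x : Fin v => Quotient.mk st x = i).card = s := by
    intro i
    obtain ⟨z, rfl⟩ := Quotient.exists_rep i
    have hfe : (univ.filter fun x : Fin v => Quotient.mk st x = Quotient.mk st z) =
        (univ.filter fun x => E z x = p) := by
      apply Finset.filter_congr
      intro x _
      rw [Quotient.eq]
      show E x z = p ↔ E z x = p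
      constructor
      · intro h; rw [hsymm.apply x z]; exact h
      · intro h; rw [← hsymm.apply x z]; exact h
    rw [hfe]
    exact (hcards z x₀).trans hs_def.symm
  have hcardsum := Finset.card_eq_sum_card_fiberwise
    (f := fun x : Fin v => Quotient.mk st x) (s := univ) (t := univ) (fun x _ => mem_univ _)
  rw [Finset.card_univ, Fintype.card_fin] at hcardsum
  have hQs : v = Fintype.card (Quotient st) * s := by
    have hsum2 : ∑ i : Quotient st, (univ.filter fun x : Fin v => Quotient.mk st x = i).card =
        Fintype.card (Quotient st) * s := by
      rw [Finset.sum_congr rfl fun i _ => hfibcard i, Finset.sum_const, smul_eq_mul,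
        Finset.card_univ]
    exact hcardsum.trans hsum2
  have hsne : (s : ℝ) ≠ 0 := by
    have : (0:ℝ) < s := by exact_mod_cast hs1
    linarith
  have hQcard : Fintype.card (Quotient st) = m + 1 := by
    have hr1 : ((Fintype.card (Quotient st) : ℝ)) * s = (s : ℝ) * ((m : ℝ) + 1) := by
      rw [← hv_eq]
      exact_mod_cast congrArg (fun n : ℕ => (n : ℝ)) hQs.symm
    have hr2 : ((Fintype.card (Quotient st) : ℝ)) = (m : ℝ) + 1 := by
      have := hr1.trans (mul_comm (s:ℝ) _)
      exact mul_right_cancel₀ hsne this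
    exact_mod_cast hr2
  let e : Quotient st ≃ Fin (m + 1) := Fintype.equivFinOfCardEq hQcard
  let c : Fin v → Fin (m + 1) := fun x => e (Quotient.mk st x)
  have hcsurj : Function.Surjective c := by
    intro i
    refine ⟨(e.symm i).out, ?_⟩
    show e (Quotient.mk st (e.symm i).out) = i
    rw [Quotient.out_eq]
    exact e.apply_symm_apply i
  have hciff : ∀ y z : Fin v, c y = c z ↔ E y z = p := by
    intro y z
    constructor
    · intro h
      have h2 := e.injective h
      exact Quotient.eq.mp h2
    · intro h
      show e (Quotient.mk st y) = e (Quotient.mk st z)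
      rw [Quotient.sound (a := y) (b := z) h]
  -- neighbour counting
  have hNkey : ∀ x z, lam * E x z =
      q * k + (p - q) * ((univ.filter fun y => G.Adj x y ∧ E y z = p).card : ℝ) := by
    intro x z
    have h1 : (G.adjMatrix ℝ * E) x z = lam * E x z := by rw [hAE]; simp
    rw [Matrix.mul_apply] at h1
    have h2 : ∀ y, G.adjMatrix ℝ x y * E y z =
        q * G.adjMatrix ℝ x y + (if G.Adj x y ∧ E y z = p then p - q else 0) := by
      intro y
      by_cases ha : G.Adj x y
      · by_cases hpv : E y z = p
        · rw [if_pos (show G.Adj x y ∧ E y z = p from ⟨ha, hpv⟩), hpv,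
            SimpleGraph.adjMatrix_apply, if_pos ha]
          ring
        · have hqv : E y z = q := (hvalpq y z).resolve_left hpv
          rw [if_neg (show ¬(G.Adj x y ∧ E y z = p) from fun hc => hpv hc.2), hqv,
            SimpleGraph.adjMatrix_apply, if_pos ha]
          ring
      · rw [if_neg (show ¬(G.Adj x y ∧ E y z = p) from fun hc => ha hc.1),
          SimpleGraph.adjMatrix_apply, if_neg ha]
        ring
    rw [← h1, Finset.sum_congr rfl fun y _ => h2 y, Finset.sum_add_distrib, ← Finset.mul_sum,
      hdeg x, ← Finset.sum_filter, Finset.sum_const, nsmul_eq_mul]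
    ring
  obtain ⟨xq, yq, hqq⟩ := hqatt
  set a : ℕ := (univ.filter fun y => G.Adj x₀ y ∧ E y x₀ = p).card with ha_def
  set b : ℕ := (univ.filter fun y => G.Adj xq y ∧ E y yq = p).card with hb_def
  have haEq : lam * p = q * k + (p - q) * a := by
    have h := hNkey x₀ x₀
    rwa [hdiagp x₀] at h
  have hbEq : lam * q = q * k + (p - q) * b := by
    have h := hNkey xq yq
    rwa [hqq] at h
  have hpqne : p - q ≠ 0 := sub_ne_zero.mpr (ne_of_gt hqp)
  have hNp : ∀ x z, E x z = p → (univ.filter fun y => G.Adj x y ∧ E y z = p).card = a := by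
    intro x z h
    have h1 := hNkey x z
    rw [h] at h1
    have h3 : (p - q) * ((univ.filter fun y => G.Adj x y ∧ E y z = p).card : ℝ) =
        (p - q) * a := by linarith
    exact_mod_cast mul_left_cancel₀ hpqne h3
  have hNq : ∀ x z, E x z = q → (univ.filter fun y => G.Adj x y ∧ E y z = p).card = b := by
    intro x z h
    have h1 := hNkey x z
    rw [h] at h1
    have h3 : (p - q) * ((univ.filter fun y => G.Adj x y ∧ E y z = p).card : ℝ) =
        (p - q) * b := by linarith
    exact_mod_cast mul_left_cancel₀ hpqne h3
  refine ⟨c, a, b, ⟨hcsurj, ?_⟩, ?_, ?_⟩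
  · intro i x
    have hz : c ((e.symm i).out) = i := by
      show e (Quotient.mk st (e.symm i).out) = i
      rw [Quotient.out_eq]
      exact e.apply_symm_apply i
    set z := (e.symm i).out with hz_def
    have hmemiff : ∀ y, c y = i ↔ E y z = p := by
      intro y
      rw [← hz, hciff]
    have hset : {y | G.Adj x y ∧ c y = i} =
        ↑(univ.filter fun y => G.Adj x y ∧ E y z = p) := by
      ext y
      simp only [Set.mem_setOf_eq, Finset.coe_filter, mem_univ, true_and, hmemiff y]
    rw [hset, Set.ncard_coe_finset]
    by_cases hx : E x z = p
    · rw [if_pos ((hmemiff x).mpr hx), hNp x z hx]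
    · rw [if_neg (fun h => hx ((hmemiff x).mp h)), hNq x z ((hvalpq x z).resolve_left hx)]
  · have hm1 : ((m : ℝ) + 1) ≠ 0 := by positivity
    have haR : ((m : ℝ) + 1) * a = lam * m + k := by
      linear_combination (-(v : ℝ)) * haEq + lam * hvp - (k : ℝ) * hvq - (a : ℝ) * hvp +
        (a : ℝ) * hvq
    field_simp
    linear_combination haR
  · have hm1 : ((m : ℝ) + 1) ≠ 0 := by positivity
    have hbR : ((m : ℝ) + 1) * b = (k : ℝ) - lam := by
      linear_combination (-(v : ℝ)) * hbEq + lam * hvq - (k : ℝ) * hvq - (b : ℝ) * hvp +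
        (b : ℝ) * hvq
    field_simp
    linear_combination hbR
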